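/- Let 𝒢₀ = (G₀, m, φ, τ) be a Γ-gain framework with V₀ nonempty and X nonzero, and let T = (dτ(γ₁), …, dτ(γₙ)) be any generating tuple for the group dτ(Γ). Then the cardinality of the RUM spectrum Ω(𝒢₀) is at least the cardinality of the joint spectrum σ(T), and for every γ ∈ Γ the cardinality of σ(T) is at least the cardinality of the spectrum σ(dτ(γ)); hence |Ω(𝒢₀)| ≥ |σ(T)| ≥ max_{γ∈Γ} |σ(dτ(γ))|. -/

import Mathlib

/-- A character of the discrete abelian group `Γ`. -/
def IsChar {Γ : Type*} [AddCommGroup Γ] (χ : Γ → ℂ) : Prop :=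
  (∀ γ γ' : Γ, χ (γ + γ') = χ γ * χ γ') ∧ ∀ γ : Γ, ‖χ γ‖ = 1

/-- The orbit matrix `O_{𝒢₀}(χ)` of a `Γ`-gain framework. -/
def orbitMatrix {Γ X Y V₀ E₀ : Type*} [AddCommGroup Γ]
    [NormedAddCommGroup X] [InnerProductSpace ℂ X]
    [NormedAddCommGroup Y] [Module ℂ Y]
    (s r : E₀ → V₀) (m : E₀ → Γ) (φ : E₀ → (X →ₗ[ℂ] Y)) (U : Γ → (X ≃ₗᵢ[ℂ] X))
    (χ : Γ → ℂ) (x : V₀ → X) (e : E₀) : Y :=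
  φ e (x (s e)) - χ (m e) • φ e (U (m e) (x (r e)))

/-- The RUM spectrum `Ω(𝒢₀)`. -/
def RUMspectrum {Γ X Y V₀ E₀ : Type*} [AddCommGroup Γ]
    [NormedAddCommGroup X] [InnerProductSpace ℂ X]
    [NormedAddCommGroup Y] [Module ℂ Y]
    (s r : E₀ → V₀) (m : E₀ → Γ) (φ : E₀ → (X →ₗ[ℂ] Y)) (U : Γ → (X ≃ₗᵢ[ℂ] X)) :
    Set (Γ → ℂ) :=
  {χ : Γ → ℂ | IsChar χ ∧ ∃ x : V₀ → X, x ≠ 0 ∧ ∀ e, orbitMatrix s r m φ U χ x e = 0}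

/-- The joint spectrum `σ(T)` of the tuple `T = (U (γs 1), …, U (γs n))`. -/
def jointSpectrum {Γ : Type*} {X : Type*} [NormedAddCommGroup X] [InnerProductSpace ℂ X]
    (U : Γ → (X ≃ₗᵢ[ℂ] X)) {n : ℕ} (γs : Fin n → Γ) : Set (Fin n → ℂ) :=
  {lam : Fin n → ℂ | ∃ a : X, a ≠ 0 ∧ ∀ j, U (γs j) a = lam j • a}


section MyAux

variable {X : Type*} [NormedAddCommGroup X] [InnerProductSpace ℂ X]

lemma myAux_affine_diff (f : X ≃ᵃⁱ[ℂ] X) (u v : X) :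
    f u - f v = f (u - v) - f 0 := by
  have h : ∀ w : X, f w = f.toAffineIsometry.linear w + f 0 := by
    intro w
    have := f.toAffineIsometry.toAffineMap.map_vadd 0 w
    rw [vadd_eq_add, add_zero] at this
    calc f w = f.toAffineIsometry.toAffineMap w := rfl
    _ = f.toAffineIsometry.linear w +ᵥ f.toAffineIsometry.toAffineMap 0 := this
    _ = f.toAffineIsometry.linear w + f 0 := rfl
  rw [h u, h v, h (u - v), map_sub]
  abel

lemma myAux_eig_unique {a : X} (ha : a ≠ 0) {c d : ℂ} (h : c • a = d • a) : c = d := by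
  by_contra hcd
  have h0 : (c - d) • a = 0 := by rw [sub_smul, h, sub_self]
  rcases smul_eq_zero.1 h0 with h1 | h1
  · exact hcd (sub_eq_zero.1 h1)
  · exact ha h1

lemma myAux_eig_ne_zero (g : X ≃ₗᵢ[ℂ] X) {a : X} (ha : a ≠ 0) {c : ℂ}
    (h : g a = c • a) : c ≠ 0 := by
  intro h0
  apply ha
  have h1 : g a = g 0 := by rw [h, h0, zero_smul, map_zero]
  exact g.injective h1

lemma myAux_eig_norm_one (g : X ≃ₗᵢ[ℂ] X) {a : X} (ha : a ≠ 0) {c : ℂ}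
    (h : g a = c • a) : ‖c‖ = 1 := by
  have h1 : ‖g a‖ = ‖a‖ := g.norm_map a
  rw [h, norm_smul] at h1
  have h2 : ‖a‖ ≠ 0 := norm_ne_zero_iff.2 ha
  have := mul_right_cancel₀ h2 (h1.trans (one_mul ‖a‖).symm)
  exact this

lemma myAux_closure_eig {n : ℕ} (S : Fin n → (X ≃ₗᵢ[ℂ] X))
    (lam : Fin n → ℂ) {a b : X} (ha : a ≠ 0) (hb : b ≠ 0)
    (hA : ∀ j, S j a = lam j • a) (hB : ∀ j, S j b = lam j • b)
    {g : X ≃ₗᵢ[ℂ] X} (hg : g ∈ Subgroup.closure (Set.range S)) :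
    ∃ c : ℂ, g a = c • a ∧ g b = c • b := by
  refine Subgroup.closure_induction (p := fun g _ => ∃ c : ℂ, g a = c • a ∧ g b = c • b)
    ?_ ⟨1, by simp, by simp⟩ ?_ ?_ hg
  · rintro x ⟨j, rfl⟩
    exact ⟨lam j, hA j, hB j⟩
  · rintro x y hx hy ⟨c, hca, hcb⟩ ⟨d, hda, hdb⟩
    refine ⟨c * d, ?_, ?_⟩
    · show x (y a) = (c * d) • a
      rw [hda, map_smul, hca, smul_smul, mul_comm]
    · show x (y b) = (c * d) • b
      rw [hdb, map_smul, hcb, smul_smul, mul_comm]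
  · rintro x hx ⟨c, hca, hcb⟩
    have hc : c ≠ 0 := myAux_eig_ne_zero x ha hca
    refine ⟨c⁻¹, ?_, ?_⟩
    · show x.symm a = c⁻¹ • a
      have : x.symm (x a) = x.symm (c • a) := by rw [hca]
      rw [x.symm_apply_apply, map_smul] at this
      exact ((inv_smul_eq_iff₀ hc).2 this).symm
    · show x.symm b = c⁻¹ • b
      have : x.symm (x b) = x.symm (c • b) := by rw [hcb]
      rw [x.symm_apply_apply, map_smul] at this
      exact ((inv_smul_eq_iff₀ hc).2 this).symm

lemma myAux_exists_joint_eig [FiniteDimensional ℂ X] :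
    ∀ (n : ℕ) (T : Fin n → (X →ₗ[ℂ] X)),
      (∀ i j x, T i (T j x) = T j (T i x)) →
      ∀ (W : Submodule ℂ X), (∃ w ∈ W, w ≠ 0) → (∀ j, ∀ x ∈ W, T j x ∈ W) →
      ∃ b, b ∈ W ∧ b ≠ 0 ∧ ∃ lam : Fin n → ℂ, ∀ j, T j b = lam j • b := by
  intro n
  induction n with
  | zero =>
    rintro T _ W ⟨w, hw, hw0⟩ _
    exact ⟨w, hw, hw0, finZeroElim, fun j => j.elim0⟩
  | succ k ih =>
    rintro T hcomm W ⟨w, hw, hw0⟩ hinv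
    haveI : Nontrivial W := nontrivial_of_ne ⟨w, hw⟩ 0 (by
      intro h
      exact hw0 (congrArg Subtype.val h))
    obtain ⟨c, hc⟩ := Module.End.exists_eigenvalue ((T 0).restrict (hinv 0))
    obtain ⟨v, hv⟩ := hc.exists_hasEigenvector
    have hv0 : (v : X) ≠ 0 := fun h => hv.right (Subtype.ext h)
    have hveq : T 0 (v : X) = c • (v : X) := by
      have h1 := hv.apply_eq_smul
      have h2 := congrArg Subtype.val h1
      simpa [LinearMap.restrict_apply] using h2
    set W' : Submodule ℂ X := W ⊓ LinearMap.ker (T 0 - c • LinearMap.id) with hW'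
    have hmemW' : ∀ x, x ∈ W' ↔ x ∈ W ∧ T 0 x = c • x := by
      intro x
      simp [hW', LinearMap.mem_ker, LinearMap.sub_apply, LinearMap.smul_apply, sub_eq_zero]
    have hinv' : ∀ j : Fin k, ∀ x ∈ W', T (Fin.succ j) x ∈ W' := by
      intro j x hx
      rw [hmemW'] at hx ⊢
      exact ⟨hinv _ x hx.1, by rw [hcomm, hx.2, map_smul]⟩
    obtain ⟨b, hbW', hb0, lam, hlam⟩ := ih (fun j => T (Fin.succ j))
      (fun i j x => hcomm _ _ x) W'
      ⟨(v : X), (hmemW' _).2 ⟨v.2, hveq⟩, hv0⟩ hinv'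
    refine ⟨b, ((hmemW' b).1 hbW').1, hb0, Fin.cons c lam, ?_⟩
    intro j
    refine Fin.cases ?_ ?_ j
    · simpa using ((hmemW' b).1 hbW').2
    · intro i
      simpa using hlam i

end MyAux

/-- `|Ω(𝒢₀)| ≥ |σ(T)|` for any generating tuple `T` of `dτ(Γ)`, and
`|σ(T)| ≥ |σ(dτ(γ))|` for every `γ ∈ Γ`; hence `|Ω(𝒢₀)| ≥ |σ(T)| ≥ max_γ |σ(dτ(γ))|`. -/
theorem card_RUMspectrum_ge
    {Γ : Type*} [AddCommGroup Γ] [AddGroup.FG Γ]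
    {X : Type*} [NormedAddCommGroup X] [InnerProductSpace ℂ X] [FiniteDimensional ℂ X]
    [Nontrivial X]
    {Y : Type*} [NormedAddCommGroup Y] [InnerProductSpace ℂ Y] [FiniteDimensional ℂ Y]
    {V₀ E₀ : Type*} [Fintype V₀] [Fintype E₀] [Nonempty V₀]
    (s r : E₀ → V₀) (m : E₀ → Γ) (φ : E₀ → (X →ₗ[ℂ] Y))
    (τ : Γ → (X ≃ᵃⁱ[ℂ] X))
    (hτ : ∀ γ γ' : Γ, ∀ x : X, τ (γ + γ') x = τ γ (τ γ' x))
    (U : Γ → (X ≃ₗᵢ[ℂ] X)) (hU : ∀ γ x, U γ x = τ γ x - τ γ 0)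
    {n : ℕ} (γs : Fin n → Γ)
    (hgen : ∀ γ : Γ, U γ ∈ Subgroup.closure (Set.range fun j => U (γs j))) :
    Nonempty ((jointSpectrum U γs) ↪ (RUMspectrum s r m φ U)) ∧
      ∀ γ : Γ, Nonempty ({c : ℂ | ∃ a : X, a ≠ 0 ∧ U γ a = c • a} ↪
        (jointSpectrum U γs)) := by
  classical
  have hhom : ∀ γ γ' : Γ, ∀ x : X, U (γ + γ') x = U γ (U γ' x) := by
    intro γ γ' x
    rw [hU (γ + γ'), hτ γ γ' x, hτ γ γ' 0, hU γ, hU γ']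
    exact myAux_affine_diff (τ γ) (τ γ' x) (τ γ' 0)
  constructor
  · -- Part 1
    have key : ∀ lam : (jointSpectrum U γs), ∃ χ : (RUMspectrum s r m φ U),
        ∀ j, (χ : Γ → ℂ) (γs j) = starRingEnd ℂ (lam.1 j) := by
      rintro ⟨lam, hlam⟩
      obtain ⟨a, ha, heig⟩ := hlam
      have hev : ∀ γ : Γ, ∃ c : ℂ, U γ a = c • a := by
        intro γ
        obtain ⟨c, h1, _⟩ :=
          myAux_closure_eig (fun j => U (γs j)) lam ha ha heig heig (hgen γ)
        exact ⟨c, h1⟩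
      choose ev hev using hev
      have hmul : ∀ γ γ', ev (γ + γ') = ev γ * ev γ' := by
        intro γ γ'
        apply myAux_eig_unique ha
        rw [← hev, hhom, hev, map_smul, hev, smul_smul, mul_comm]
      have hnorm : ∀ γ, ‖ev γ‖ = 1 := fun γ => myAux_eig_norm_one (U γ) ha (hev γ)
      set χ : Γ → ℂ := fun γ => starRingEnd ℂ (ev γ) with hχdef
      have hchar : IsChar χ := by
        constructor
        · intro γ γ'
          simp only [hχdef, hmul, map_mul]
        · intro γ
          simp only [hχdef, RCLike.norm_conj]
          exact hnorm γ
      have hone : ∀ γ, χ γ * ev γ = 1 := by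
        intro γ
        rw [hχdef]
        simp only []
        rw [mul_comm, Complex.mul_conj]
        have h2 : Complex.normSq (ev γ) = 1 := by
          rw [Complex.normSq_eq_norm_sq, hnorm]
          norm_num
        rw [h2, Complex.ofReal_one]
      have hker : ∀ e, orbitMatrix s r m φ U χ (fun _ => a) e = 0 := by
        intro e
        unfold orbitMatrix
        rw [hev, map_smul, smul_smul, hone, one_smul, sub_self]
      have hx0 : (fun _ : V₀ => a) ≠ 0 := by
        intro h
        exact ha (congrFun h (Classical.arbitrary V₀))
      refine ⟨⟨χ, hchar, (fun _ => a), hx0, hker⟩, ?_⟩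
      intro j
      show starRingEnd ℂ (ev (γs j)) = starRingEnd ℂ (lam j)
      congr 1
      exact myAux_eig_unique ha ((hev (γs j)).symm.trans (heig j))
    choose F hF using key
    refine ⟨⟨F, ?_⟩⟩
    intro l1 l2 h
    apply Subtype.ext
    funext j
    have h1 := hF l1 j
    have h2 := hF l2 j
    rw [h] at h1
    have := h1.symm.trans h2
    exact (starRingEnd ℂ).injective this.symm |>.symm ▸ rfl
  · -- Part 2
    intro γ
    have key : ∀ c : ({c : ℂ | ∃ a : X, a ≠ 0 ∧ U γ a = c • a}),
        ∃ lam : (jointSpectrum U γs),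
          ∀ b : X, b ≠ 0 → (∀ j, U (γs j) b = lam.1 j • b) → U γ b = c.1 • b := by
      rintro ⟨c, hc⟩
      obtain ⟨a, ha, hca⟩ := hc
      set T : Fin n → (X →ₗ[ℂ] X) := fun j => (U (γs j)).toLinearEquiv.toLinearMap with hT
      have hTapp : ∀ j x, T j x = U (γs j) x := fun j x => rfl
      have hcomm : ∀ i j x, T i (T j x) = T j (T i x) := by
        intro i j x
        rw [hTapp, hTapp, hTapp, hTapp, ← hhom, ← hhom, add_comm]
      set W : Submodule ℂ X :=
        LinearMap.ker ((U γ).toLinearEquiv.toLinearMap - c • LinearMap.id) with hW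
      have hmemW : ∀ x, x ∈ W ↔ U γ x = c • x := by
        intro x
        rw [hW, LinearMap.mem_ker, LinearMap.sub_apply, LinearMap.smul_apply,
          LinearMap.id_apply, sub_eq_zero]
        rfl
      have hinv : ∀ j, ∀ x ∈ W, T j x ∈ W := by
        intro j x hx
        rw [hmemW] at hx ⊢
        rw [hTapp, ← hhom, add_comm, hhom, hx, map_smul]
      obtain ⟨b, hbW, hb0, lam, hlamb⟩ :=
        myAux_exists_joint_eig n T hcomm W ⟨a, (hmemW a).2 hca, ha⟩ hinv
      have hUb : U γ b = c • b := (hmemW b).1 hbW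
      have hjoint : ∀ j, U (γs j) b = lam j • b := fun j => hlamb j
      refine ⟨⟨lam, b, hb0, hjoint⟩, ?_⟩
      intro b' hb' hjb'
      obtain ⟨d, hd1, hd2⟩ :=
        myAux_closure_eig (fun j => U (γs j)) lam hb0 hb' hjoint hjb' (hgen γ)
      have hdc : d = c := myAux_eig_unique hb0 (hd1.symm.trans hUb)
      rw [hd2, hdc]
    choose F hF using key
    refine ⟨⟨F, ?_⟩⟩
    intro c1 c2 h
    obtain ⟨b, hb0, hjb⟩ := (F c1).2
    have h1 := hF c1 b hb0 hjb
    have h2 := hF c2 b hb0 (by rw [← h]; exact hjb)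
    apply Subtype.ext
    exact myAux_eig_unique hb0 (h1.symm.trans h2)
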